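/- For an SCH, the (k+2)-cocycles that lie in H^k are exactly the k-cocycles: H_c^{k+2} ∩ H^k = H_c^k, and moreover H_c^k ⊂ H_b^{k+2}. -/
import Mathlib


/-- The coboundary operator `∂^k = Σ_{i=0}^{k+1} (-1)^{k+1-i} α_i` (for `k ≥ -2`; by
convention `∂^k = 0` for `k ≤ -2`), as an operator on the ambient Hilbert space, built
from the partial shifts `α i`. -/
noncomputable def coboundaryZ {H : Type*} [NormedAddCommGroup H] [InnerProductSpace ℂ H]
    (α : ℕ → H →ₗᵢ[ℂ] H) (k : ℤ) (x : H) : H :=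
  ∑ i ∈ Finset.range (k + 2).toNat, ((-1 : ℂ) ^ (k + 1 - (i : ℤ))) • α i x

/-- For an SCH (modelled via its partial shifts, with `x ∈ H^ℓ` expressed as
`α i x = x` for all `i > ℓ`): the `(k+2)`-cocycles lying in `H^k` are exactly the
`k`-cocycles, `H_c^{k+2} ∩ H^k = H_c^k`, and moreover `H_c^k ⊆ H_b^{k+2}`. -/
theorem cocycle_two_levels_up
    {H : Type*} [NormedAddCommGroup H] [InnerProductSpace ℂ H] [CompleteSpace H]
    (α : ℕ → H →ₗᵢ[ℂ] H)
    (hps : ∀ i j : ℕ, i < j → ∀ x : H, α j (α i x) = α i (α (j - 1) x))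
    (k : ℤ) (hk : -1 ≤ k) (x : H) (hx : ∀ i : ℕ, k < (i : ℤ) → α i x = x) :
    (coboundaryZ α (k + 2) x = 0 ↔ coboundaryZ α k x = 0) ∧
      (coboundaryZ α k x = 0 →
        ∃ y : H, (∀ i : ℕ, k + 1 < (i : ℤ) → α i y = y) ∧ x = coboundaryZ α (k + 1) y) := by
  have hk2 : (0:ℤ) ≤ k + 2 := by omega
  set n := (k + 2).toNat with hn
  have hnk : (n : ℤ) = k + 2 := Int.toNat_of_nonneg hk2
  have h4 : (k + 2 + 2).toNat = n + 2 := by omega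
  have h3 : (k + 1 + 2).toNat = n + 1 := by omega
  have hneg : (-1 : ℂ) ≠ 0 := by norm_num
  have hαn : α n x = x := hx n (by omega)
  have hαn1 : α (n + 1) x = x := hx (n + 1) (by push_cast; omega)
  -- ∂^{k+2} x = ∂^k x
  have hA : coboundaryZ α (k + 2) x = coboundaryZ α k x := by
    unfold coboundaryZ
    rw [h4, Finset.sum_range_succ, Finset.sum_range_succ]
    have e1 : ∀ i ∈ Finset.range n,
        ((-1 : ℂ) ^ (k + 2 + 1 - (i : ℤ))) • α i x
          = ((-1 : ℂ) ^ (k + 1 - (i : ℤ))) • α i x := by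
      intro i _
      congr 1
      have h : k + 2 + 1 - (i : ℤ) = (k + 1 - (i : ℤ)) + 2 := by ring
      rw [h, zpow_add₀ hneg]
      norm_num
    rw [Finset.sum_congr rfl e1, hαn, hαn1]
    have c1 : (-1 : ℂ) ^ (k + 2 + 1 - (n : ℤ)) = -1 := by
      have h : k + 2 + 1 - (n : ℤ) = 1 := by omega
      rw [h]; norm_num
    have c2 : (-1 : ℂ) ^ (k + 2 + 1 - ((n + 1 : ℕ) : ℤ)) = 1 := by
      have h : k + 2 + 1 - ((n + 1 : ℕ) : ℤ) = 0 := by push_cast; omega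
      rw [h]; norm_num
    rw [c1, c2]
    simp only [neg_smul, one_smul]
    abel
  refine ⟨by rw [hA], fun h0 => ⟨x, fun i hi => hx i (by omega), ?_⟩⟩
  -- ∂^{k+1} x = x when ∂^k x = 0
  unfold coboundaryZ
  rw [h3, Finset.sum_range_succ]
  have e1 : ∀ i ∈ Finset.range n,
      ((-1 : ℂ) ^ (k + 1 + 1 - (i : ℤ))) • α i x
        = -(((-1 : ℂ) ^ (k + 1 - (i : ℤ))) • α i x) := by
    intro i _
    rw [← neg_smul]
    congr 1
    have h : k + 1 + 1 - (i : ℤ) = (k + 1 - (i : ℤ)) + 1 := by ring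
    rw [h, zpow_add₀ hneg]
    norm_num
  rw [Finset.sum_congr rfl e1, Finset.sum_neg_distrib, hαn]
  have c1 : (-1 : ℂ) ^ (k + 1 + 1 - (n : ℤ)) = 1 := by
    have h : k + 1 + 1 - (n : ℤ) = 0 := by omega
    rw [h]; norm_num
  rw [c1]
  have h0' : ∑ i ∈ Finset.range n, ((-1 : ℂ) ^ (k + 1 - (i : ℤ))) • α i x = 0 := by
    have := h0
    unfold coboundaryZ at this
    rwa [← hn] at this
  rw [h0']
  simp
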